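/- Let s be a symmetric family of scalars s^{ij} = s^{ji} (i, j ∈ ι), and let Φ_s be the k-algebra endomorphism of the polynomial ring determined by x^i ↦ x^i + Σ_j s^{ij} y_j and y_i ↦ y_i. Then for every i ∈ ι, Φ_s applied to the Hamiltonian H_i built from the tensors (a,b,c) equals the Hamiltonian H_i built from the tensors (a, b', c'), where b'_{ij}^k := b_{ij}^k + Σ_l a_{ijl} s^{lk} and c'_i^{jk} := c_i^{jk} + Σ_{l₁,l₂} a_{i l₁ l₂} s^{l₁ j} s^{l₂ k} + Σ_l b_{il}^k s^{lj} + Σ_l b_{il}^j s^{lk}. -/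

import Mathlib

open MvPolynomial

namespace Airy

variable {k : Type*} [Field k] [CharZero k] {ι : Type*} [Fintype ι] [DecidableEq ι]

/-- The Poisson bracket on polynomials in the variables `x^i = X (Sum.inl i)`,
`y_i = X (Sum.inr i)`, so that `{y_i, x^j} = δ_{ij}`. -/
noncomputable def poissonBracket (f g : MvPolynomial (ι ⊕ ι) k) : MvPolynomial (ι ⊕ ι) k :=
  ∑ i : ι, (pderiv (Sum.inr i) f * pderiv (Sum.inl i) g
          - pderiv (Sum.inl i) f * pderiv (Sum.inr i) g)

/-- The quadratic Hamiltonian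
`H_i = -y_i + Σ a_{ijl} x^j x^l + 2 Σ b_{ij}^l x^j y_l + Σ c_i^{jl} y_j y_l`. -/
noncomputable def Ham (a b c : ι → ι → ι → k) (i : ι) : MvPolynomial (ι ⊕ ι) k :=
  - X (Sum.inr i)
  + ∑ j : ι, ∑ l : ι, C (a i j l) * X (Sum.inl j) * X (Sum.inl l)
  + 2 * ∑ j : ι, ∑ l : ι, C (b i j l) * X (Sum.inl j) * X (Sum.inr l)
  + ∑ j : ι, ∑ l : ι, C (c i j l) * X (Sum.inr j) * X (Sum.inr l)

set_option linter.unusedSectionVars false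

private lemma sum3_swap12 {M : Type*} [AddCommMonoid M] (f : ι → ι → ι → M) :
    ∑ j : ι, ∑ l : ι, ∑ m : ι, f j l m = ∑ j : ι, ∑ l : ι, ∑ m : ι, f l j m :=
  Finset.sum_comm

private lemma sum3_swap23 {M : Type*} [AddCommMonoid M] (f : ι → ι → ι → M) :
    ∑ j : ι, ∑ l : ι, ∑ m : ι, f j l m = ∑ j : ι, ∑ l : ι, ∑ m : ι, f j m l :=
  Finset.sum_congr rfl fun _ _ => Finset.sum_comm

private lemma sum3_cycle {M : Type*} [AddCommMonoid M] (f : ι → ι → ι → M) :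
    ∑ j : ι, ∑ l : ι, ∑ m : ι, f j l m = ∑ j : ι, ∑ l : ι, ∑ m : ι, f m j l :=
  (sum3_swap12 f).trans (sum3_swap23 _)

private lemma sum3_swap13 {M : Type*} [AddCommMonoid M] (f : ι → ι → ι → M) :
    ∑ j : ι, ∑ l : ι, ∑ m : ι, f j l m = ∑ j : ι, ∑ l : ι, ∑ m : ι, f m l j :=
  (sum3_cycle f).trans (sum3_swap12 _)

private lemma sum4_swap12 {M : Type*} [AddCommMonoid M] (f : ι → ι → ι → ι → M) :
    ∑ j : ι, ∑ l : ι, ∑ m : ι, ∑ n : ι, f j l m n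
      = ∑ j : ι, ∑ l : ι, ∑ m : ι, ∑ n : ι, f l j m n :=
  Finset.sum_comm

private lemma sum4_swap23 {M : Type*} [AddCommMonoid M] (f : ι → ι → ι → ι → M) :
    ∑ j : ι, ∑ l : ι, ∑ m : ι, ∑ n : ι, f j l m n
      = ∑ j : ι, ∑ l : ι, ∑ m : ι, ∑ n : ι, f j m l n :=
  Finset.sum_congr rfl fun _ _ => Finset.sum_comm

private lemma sum4_swap34 {M : Type*} [AddCommMonoid M] (f : ι → ι → ι → ι → M) :
    ∑ j : ι, ∑ l : ι, ∑ m : ι, ∑ n : ι, f j l m n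
      = ∑ j : ι, ∑ l : ι, ∑ m : ι, ∑ n : ι, f j l n m :=
  Finset.sum_congr rfl fun _ _ => Finset.sum_congr rfl fun _ _ => Finset.sum_comm

private lemma sum4_perm {M : Type*} [AddCommMonoid M] (f : ι → ι → ι → ι → M) :
    ∑ j : ι, ∑ l : ι, ∑ m : ι, ∑ n : ι, f j l m n
      = ∑ j : ι, ∑ l : ι, ∑ m : ι, ∑ n : ι, f m n l j :=
  (sum4_swap34 f).trans ((sum4_swap12 _).trans ((sum4_swap23 _).trans
    ((sum4_swap12 _).trans ((sum4_swap23 _).trans ((sum4_swap34 _).trans (sum4_swap23 _))))))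

/-- the gauge transformation `x^i ↦ x^i + Σ_j s^{ij} y_j`, `y_i ↦ y_i`
(for a symmetric family `s`) sends the Hamiltonians of `(a,b,c)` to the Hamiltonians of the
gauge-transformed tensors `(a, b', c')`. -/
theorem gauge_transform_ham
    (a b c : ι → ι → ι → k) (s : ι → ι → k)
    (ha : ∀ i j l, a i j l = a i l j) (hc : ∀ i j l, c i j l = c i l j)
    (hs : ∀ i j, s i j = s j i) :
    ∀ i : ι,
      MvPolynomial.aeval
        (Sum.elim
          (fun j => X (Sum.inl j) + ∑ l : ι, C (s j l) * X (Sum.inr l))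
          (fun j => (X (Sum.inr j) : MvPolynomial (ι ⊕ ι) k)))
        (Ham a b c i)
      = Ham a
          (fun i j l => b i j l + ∑ m : ι, a i j m * s m l)
          (fun i j l => c i j l
            + (∑ m₁ : ι, ∑ m₂ : ι, a i m₁ m₂ * s m₁ j * s m₂ l)
            + (∑ m : ι, b i m l * s m j) + (∑ m : ι, b i m j * s m l))
          i := by
  intro i
  simp only [Ham, map_add, map_neg, map_sum, map_mul, aeval_X, Sum.elim_inl, Sum.elim_inr,
    map_ofNat, aeval_C, MvPolynomial.algebraMap_eq]
  simp only [mul_add, add_mul, Finset.mul_sum, Finset.sum_mul, Finset.sum_add_distrib, map_mul]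
  ring_nf
  -- canonical pieces
  set T0 : MvPolynomial (ι ⊕ ι) k :=
    ∑ j : ι, ∑ l : ι, ∑ m : ι,
      C (a i j m) * C (s m l) * X (Sum.inl j) * X (Sum.inr l) with hT0
  set SW : MvPolynomial (ι ⊕ ι) k :=
    ∑ j : ι, ∑ l : ι, ∑ m : ι,
      C (b i j l) * C (s j m) * X (Sum.inr m) * X (Sum.inr l) with hSW
  have hL3 :
      (∑ j : ι, ∑ l : ι, ∑ m : ι,
        C (a i j l) * C (s j m) * X (Sum.inr m) * (X (Sum.inl l) : MvPolynomial (ι ⊕ ι) k)) = T0 := by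
    rw [sum3_cycle (fun j l m =>
      C (a i j l) * C (s j m) * X (Sum.inr m) * (X (Sum.inl l) : MvPolynomial (ι ⊕ ι) k)), hT0]
    exact Finset.sum_congr rfl fun j _ => Finset.sum_congr rfl fun l _ =>
      Finset.sum_congr rfl fun m _ => by rw [ha i m j]; ring
  have hL4 :
      (∑ j : ι, ∑ l : ι, ∑ m : ι,
        C (a i j l) * X (Sum.inl j) * C (s l m) * X (Sum.inr m)) = T0 := by
    rw [hT0]
    refine Finset.sum_congr rfl fun j _ => ?_
    rw [Finset.sum_comm]
    exact Finset.sum_congr rfl fun l _ => Finset.sum_congr rfl fun m _ => by ring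
  have hR7 :
      (∑ j : ι, ∑ l : ι, ∑ m : ι,
        2 * C (a i j m) * C (s m l) * X (Sum.inl j) * X (Sum.inr l)) = T0 + T0 := by
    rw [hT0, ← Finset.sum_add_distrib]
    refine Finset.sum_congr rfl fun j _ => ?_
    rw [← Finset.sum_add_distrib]
    refine Finset.sum_congr rfl fun l _ => ?_
    rw [← Finset.sum_add_distrib]
    exact Finset.sum_congr rfl fun m _ => by ring
  have hL5 :
      (∑ j : ι, ∑ l : ι, ∑ m : ι, ∑ n : ι,
        C (a i j l) * C (s j n) * X (Sum.inr n) * C (s l m) * (X (Sum.inr m) : MvPolynomial (ι ⊕ ι) k))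
      = ∑ j : ι, ∑ l : ι, ∑ m : ι, ∑ n : ι,
        C (a i m n) * C (s m j) * C (s n l) * X (Sum.inr j) * X (Sum.inr l) := by
    rw [sum4_perm (fun j l m n =>
      C (a i j l) * C (s j n) * X (Sum.inr n) * C (s l m) * (X (Sum.inr m) : MvPolynomial (ι ⊕ ι) k))]
    exact Finset.sum_congr rfl fun j _ => Finset.sum_congr rfl fun l _ =>
      Finset.sum_congr rfl fun m _ => Finset.sum_congr rfl fun n _ => by ring
  have hL7 :
      (∑ j : ι, ∑ l : ι, ∑ m : ι,
        2 * C (b i j l) * C (s j m) * X (Sum.inr m) * (X (Sum.inr l) : MvPolynomial (ι ⊕ ι) k)) = SW + SW := by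
    rw [hSW, ← Finset.sum_add_distrib]
    refine Finset.sum_congr rfl fun j _ => ?_
    rw [← Finset.sum_add_distrib]
    refine Finset.sum_congr rfl fun l _ => ?_
    rw [← Finset.sum_add_distrib]
    exact Finset.sum_congr rfl fun m _ => by ring
  have hSW4 :
      SW = ∑ j : ι, ∑ l : ι, ∑ m : ι,
        C (b i m l) * C (s m j) * X (Sum.inr j) * (X (Sum.inr l) : MvPolynomial (ι ⊕ ι) k) := by
    rw [hSW, sum3_swap13 (fun j l m =>
      C (b i j l) * C (s j m) * X (Sum.inr m) * (X (Sum.inr l) : MvPolynomial (ι ⊕ ι) k))]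
  have hSW5 :
      SW = ∑ j : ι, ∑ l : ι, ∑ m : ι,
        C (b i m j) * C (s m l) * X (Sum.inr j) * (X (Sum.inr l) : MvPolynomial (ι ⊕ ι) k) := by
    rw [hSW, sum3_cycle (fun j l m =>
      C (b i j l) * C (s j m) * X (Sum.inr m) * (X (Sum.inr l) : MvPolynomial (ι ⊕ ι) k))]
    exact Finset.sum_congr rfl fun j _ => Finset.sum_congr rfl fun l _ =>
      Finset.sum_congr rfl fun m _ => by ring
  have e1 : (∑ x : ι, ∑ x_1 : ι, ∑ x_2 : ι, C (b i x x_1) * C (s x x_2) * X (Sum.inr x_2) * (X (Sum.inr x_1) : MvPolynomial (ι ⊕ ι) k) * 2)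
      = ∑ j : ι, ∑ l : ι, ∑ m : ι, 2 * C (b i j l) * C (s j m) * X (Sum.inr m) * X (Sum.inr l) :=
    Finset.sum_congr rfl fun j _ => Finset.sum_congr rfl fun l _ =>
      Finset.sum_congr rfl fun m _ => by ring
  have e2 : (∑ x : ι, ∑ x_1 : ι, ∑ x_2 : ι, C (a i x x_2) * C (s x_2 x_1) * X (Sum.inl x) * (X (Sum.inr x_1) : MvPolynomial (ι ⊕ ι) k) * 2)
      = ∑ j : ι, ∑ l : ι, ∑ m : ι, 2 * C (a i j m) * C (s m l) * X (Sum.inl j) * X (Sum.inr l) :=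
    Finset.sum_congr rfl fun j _ => Finset.sum_congr rfl fun l _ =>
      Finset.sum_congr rfl fun m _ => by ring
  linear_combination hL3 + hL4 - hR7 + hL5 + hL7 + hSW4 + hSW5 + e1 - e2


end Airy
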